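/- Let Φ = (V, 𝒬, 𝒞) be a CSP formula, p' ∈ (0,1) with e·p'·q·(Δ+1) < 1, and X ∈ ∏_{v∈V}(Q_v ∪ {☆}) a partial assignment (having no ⋆ values) with ℙ[¬c | X] ≤ p'·q for every c ∈ 𝒞. Then the number of satisfying assignments of Φ that agree with X on Λ(X), divided by the number of all assignments in 𝒬 that agree with X on Λ(X), is at least (1 − e·p'·q)^{|𝒞|}. -/

import Mathlib

open Finset

inductive PVal (α : Type) : Type where
  | val (a : α)
  | star
  | unacc

structure CSP (V : Type) [Fintype V] [DecidableEq V] where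
  Q : V → Type
  fintypeQ : ∀ v, Fintype (Q v)
  decEqQ : ∀ v, DecidableEq (Q v)
  card_two : ∀ v, 2 ≤ Fintype.card (Q v)
  C : Type
  fintypeC : Fintype C
  decEqC : DecidableEq C
  vbl : C → Finset V
  sat : C → ((v : V) → Q v) → Prop
  sat_local : ∀ c x y, (∀ v ∈ vbl c, x v = y v) → sat c x → sat c y

attribute [instance] CSP.fintypeQ CSP.decEqQ CSP.fintypeC CSP.decEqC

namespace CSP

variable {V : Type} [Fintype V] [DecidableEq V] (Φ : CSP V)

/-- The space of (full) assignments `𝒬 = ∏_v Q_v`. -/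
abbrev Assign := (v : V) → Φ.Q v

/-- Partial assignments `𝒬* = ∏_v (Q_v ∪ {⋆, ☆})`. -/
abbrev PAssign := (v : V) → PVal (Φ.Q v)

/-- A full assignment agrees with a partial assignment on all assigned variables. -/
def agrees (σ : Φ.PAssign) (x : Φ.Assign) : Prop :=
  ∀ (v : V) (a : Φ.Q v), σ v = PVal.val a → x v = a

/-- `v ∈ Λ(σ)` : the variable `v` is assigned a value from its domain in `σ`. -/
def assigned (σ : Φ.PAssign) (v : V) : Prop := ∃ a, σ v = PVal.val a

/-- The set of satisfying assignments. -/
def Sat : Set Φ.Assign := {x | ∀ c, Φ.sat c x}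

/-- The event `¬ c` that constraint `c` is violated. -/
def viol (c : Φ.C) : Set Φ.Assign := {x | ¬ Φ.sat c x}

/-- `ℙ[A]` : probability of the event `A` under the uniform product distribution. -/
noncomputable def prob (A : Set Φ.Assign) : ℝ :=
  (A.ncard : ℝ) / (Fintype.card Φ.Assign : ℝ)

/-- `ℙ[A | σ]` : probability of `A` under the uniform product distribution conditioned
on agreeing with `σ` on all assigned variables. -/
noncomputable def condProb (A : Set Φ.Assign) (σ : Φ.PAssign) : ℝ :=
  ((A ∩ {x | Φ.agrees σ x}).ncard : ℝ) / (({x : Φ.Assign | Φ.agrees σ x}).ncard : ℝ)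

/-- `Pr_μ[A]` : probability of `A` under the uniform distribution over satisfying assignments. -/
noncomputable def muProb (A : Set Φ.Assign) : ℝ :=
  ((A ∩ Φ.Sat).ncard : ℝ) / ((Φ.Sat.ncard : ℝ))

/-- the domain size `q`. -/
noncomputable def qmax : ℕ := Finset.univ.sup fun v : V => Fintype.card (Φ.Q v)

/-- the width `k`. -/
noncomputable def width : ℕ := Finset.univ.sup fun c : Φ.C => (Φ.vbl c).card

/-- the dependency degree `Δ`. -/
noncomputable def degree : ℕ :=
  Finset.univ.sup fun c : Φ.C =>
    (Finset.univ.filter fun c' : Φ.C => c' ≠ c ∧ ((Φ.vbl c) ∩ (Φ.vbl c')).Nonempty).card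

end CSP

/- ======================= auxiliary development ======================= -/

namespace CSPaux

open Classical

variable {V : Type} [Fintype V] [DecidableEq V] (Φ : CSP V) (X : Φ.PAssign)

/-- assignments agreeing with `X` and satisfying all constraints of `S`. -/
noncomputable def NS (S : Finset Φ.C) : Finset Φ.Assign :=
  Finset.univ.filter fun x => Φ.agrees X x ∧ ∀ c ∈ S, Φ.sat c x

/-- assignments agreeing with `X`, satisfying `S`, violating `c`. -/
noncomputable def VS (c : Φ.C) (S : Finset Φ.C) : Finset Φ.Assign :=
  Finset.univ.filter fun x => (Φ.agrees X x ∧ ∀ c' ∈ S, Φ.sat c' x) ∧ ¬ Φ.sat c x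

lemma mem_NS {S : Finset Φ.C} {x : Φ.Assign} :
    x ∈ NS Φ X S ↔ Φ.agrees X x ∧ ∀ c ∈ S, Φ.sat c x := by
  simp [NS]

lemma mem_VS {c : Φ.C} {S : Finset Φ.C} {x : Φ.Assign} :
    x ∈ VS Φ X c S ↔ (Φ.agrees X x ∧ ∀ c' ∈ S, Φ.sat c' x) ∧ ¬ Φ.sat c x := by
  simp [VS]

lemma split (c : Φ.C) (S : Finset Φ.C) :
    (NS Φ X S).card = (NS Φ X (insert c S)).card + (VS Φ X c S).card := by
  have h := Finset.card_filter_add_card_filter_not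
    (s := NS Φ X S) (p := fun x => Φ.sat c x)
  have h1 : (NS Φ X S).filter (fun x => Φ.sat c x) = NS Φ X (insert c S) := by
    ext x
    simp only [Finset.mem_filter, mem_NS, Finset.mem_insert]
    constructor
    · rintro ⟨⟨ha, hs⟩, hc⟩
      exact ⟨ha, fun c' hc' => by rcases hc' with rfl | hc' <;> [exact hc; exact hs c' hc']⟩
    · rintro ⟨ha, hs⟩
      exact ⟨⟨ha, fun c' hc' => hs c' (Or.inr hc')⟩, hs c (Or.inl rfl)⟩
  have h2 : (NS Φ X S).filter (fun x => ¬ Φ.sat c x) = VS Φ X c S := by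
    ext x
    simp only [Finset.mem_filter, mem_NS, mem_VS]
    try tauto
  rw [h1, h2] at h
  omega

lemma NS_subset {S T : Finset Φ.C} (h : S ⊆ T) : NS Φ X T ⊆ NS Φ X S := by
  intro x hx
  rw [mem_NS] at hx ⊢
  exact ⟨hx.1, fun c hc => hx.2 c (h hc)⟩

/-- merge two assignments along a variable set. -/
noncomputable def merge (T : Finset V) (x y : Φ.Assign) : Φ.Assign :=
  fun v => if v ∈ T then x v else y v

lemma agrees_merge {T : Finset V} {x y : Φ.Assign}
    (hx : Φ.agrees X x) (hy : Φ.agrees X y) : Φ.agrees X (merge Φ T x y) := by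
  intro v a hv
  unfold merge
  split
  · exact hx v a hv
  · exact hy v a hv

lemma sat_merge_left {c : Φ.C} {T : Finset V} (hT : Φ.vbl c ⊆ T) {x y : Φ.Assign} :
    Φ.sat c (merge Φ T x y) ↔ Φ.sat c x := by
  constructor
  · exact Φ.sat_local c _ x (fun v hv => by simp [merge, hT hv])
  · exact Φ.sat_local c x _ (fun v hv => by simp [merge, hT hv])

lemma sat_merge_right {c : Φ.C} {T : Finset V} (hT : Φ.vbl c ∩ T = ∅) {x y : Φ.Assign} :
    Φ.sat c (merge Φ T x y) ↔ Φ.sat c y := by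
  have hvT : ∀ v ∈ Φ.vbl c, v ∉ T := by
    intro v hv hvT
    exact Finset.notMem_empty v (hT ▸ Finset.mem_inter.2 ⟨hv, hvT⟩)
  constructor
  · exact Φ.sat_local c _ y (fun v hv => by simp [merge, hvT v hv])
  · exact Φ.sat_local c y _ (fun v hv => by simp [merge, hvT v hv])

/-- Independence: events on disjoint variable sets are independent under the
conditional uniform measure. -/
lemma indep (c : Φ.C) (S : Finset Φ.C)
    (hdisj : ∀ c' ∈ S, Φ.vbl c ∩ Φ.vbl c' = ∅) :
    (VS Φ X c S).card * (NS Φ X ∅).card = (VS Φ X c ∅).card * (NS Φ X S).card := by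
  classical
  have hdisj' : ∀ c' ∈ S, Φ.vbl c' ∩ Φ.vbl c = ∅ := by
    intro c' hc'; rw [Finset.inter_comm]; exact hdisj c' hc'
  rw [← Finset.card_product, ← Finset.card_product]
  set T := Φ.vbl c with hT
  refine Finset.card_bij'
    (fun p _ => (merge Φ T p.1 p.2, merge Φ T p.2 p.1))
    (fun p _ => (merge Φ T p.1 p.2, merge Φ T p.2 p.1)) ?_ ?_ ?_ ?_
  · rintro ⟨x, y⟩ hp
    rw [Finset.mem_product] at hp
    obtain ⟨hx, hy⟩ := hp
    rw [mem_VS] at hx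
    rw [mem_NS] at hy
    rw [Finset.mem_product]
    constructor
    · rw [mem_VS]
      refine ⟨⟨agrees_merge Φ X hx.1.1 hy.1, by simp⟩, ?_⟩
      rw [sat_merge_left Φ (le_refl T)]
      exact hx.2
    · rw [mem_NS]
      refine ⟨agrees_merge Φ X hy.1 hx.1.1, ?_⟩
      intro c' hc'
      rw [sat_merge_right Φ (hdisj' c' hc')]
      exact hx.1.2 c' hc'
  · rintro ⟨x, y⟩ hp
    rw [Finset.mem_product] at hp
    obtain ⟨hx, hy⟩ := hp
    rw [mem_VS] at hx
    rw [mem_NS] at hy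
    rw [Finset.mem_product]
    constructor
    · rw [mem_VS]
      refine ⟨⟨agrees_merge Φ X hx.1.1 hy.1, ?_⟩, ?_⟩
      · intro c' hc'
        rw [sat_merge_right Φ (hdisj' c' hc')]
        exact hy.2 c' hc'
      · rw [sat_merge_left Φ (le_refl T)]
        exact hx.2
    · rw [mem_NS]
      exact ⟨agrees_merge Φ X hy.1 hx.1.1, by simp⟩
  · rintro ⟨x, y⟩ _
    simp only [Prod.mk.injEq]
    constructor <;> (funext v; simp only [merge]; split <;> rfl)
  · rintro ⟨x, y⟩ _
    simp only [Prod.mk.injEq]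
    constructor <;> (funext v; simp only [merge]; split <;> rfl)

/-- the key numeric inequality `e · (1 - ep)^Δ ≥ 1` when `ep (Δ+1) < 1`. -/
lemma key_ineq (d : ℕ) (ep : ℝ) (h0 : 0 ≤ ep) (h1 : ep * ((d : ℝ) + 1) < 1) :
    1 ≤ Real.exp 1 * (1 - ep) ^ d := by
  rcases Nat.eq_zero_or_pos d with rfl | hd
  · simpa using le_of_lt (by linarith [Real.add_one_le_exp (1:ℝ)] : (1:ℝ) < Real.exp 1)
  · have hd1 : (1 : ℝ) ≤ (d : ℝ) := by exact_mod_cast hd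
    have hdpos : (0 : ℝ) < d := by linarith
    have hstep : 1 + 1 / (d : ℝ) ≤ Real.exp (1 / d) := by
      have := Real.add_one_le_exp (1 / (d : ℝ)); linarith
    have hstep2 : (1 + 1 / (d : ℝ)) ^ d ≤ Real.exp 1 := by
      calc (1 + 1 / (d : ℝ)) ^ d ≤ (Real.exp (1 / d)) ^ d :=
            pow_le_pow_left₀ (by positivity) hstep d
        _ = Real.exp 1 := by
            rw [← Real.exp_nat_mul]
            congr 1
            field_simp
    have hq : (d : ℝ) / (d + 1) ≤ 1 - ep := by
      have h2 : ep < 1 / ((d : ℝ) + 1) := by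
        rw [lt_div_iff₀ (by positivity)]; linarith
      have he : 1 - 1 / ((d : ℝ) + 1) = (d : ℝ) / (d + 1) := by field_simp; ring
      linarith [he]
    have hmul : ((d : ℝ) / (d + 1)) * (1 + 1 / d) = 1 := by field_simp
    have hpow : ((d : ℝ) / (d + 1)) ^ d * (1 + 1 / d) ^ d = 1 := by
      rw [← mul_pow, hmul, one_pow]
    calc (1 : ℝ) = ((d : ℝ) / (d + 1)) ^ d * (1 + 1 / d) ^ d := hpow.symm
      _ ≤ (1 - ep) ^ d * Real.exp 1 :=
          mul_le_mul (pow_le_pow_left₀ (by positivity) hq d) hstep2 (by positivity)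
            (pow_nonneg (le_trans (by positivity) hq) d)
      _ = Real.exp 1 * (1 - ep) ^ d := mul_comm _ _

section Main

variable {p : ℝ}

/-- the chain lemma: repeatedly peel off constraints. -/
lemma chain_lemma (hep0 : 0 ≤ Real.exp 1 * p) (hep1 : Real.exp 1 * p ≤ 1) (n : ℕ)
    (hB : ∀ S : Finset Φ.C, S.card ≤ n → ∀ c ∉ S,
      ((VS Φ X c S).card : ℝ) ≤ (Real.exp 1 * p) * ((NS Φ X S).card : ℝ)) :
    ∀ (U T : Finset Φ.C), Disjoint U T → (T ∪ U).card ≤ n + 1 →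
      (1 - Real.exp 1 * p) ^ U.card * ((NS Φ X T).card : ℝ) ≤ ((NS Φ X (T ∪ U)).card : ℝ) := by
  intro U
  induction U using Finset.induction_on with
  | empty => intro T _ _; simp
  | @insert c U' hc ih =>
      intro T hdis hcard
      have hcT : c ∉ T := by
        have := Finset.disjoint_left.1 hdis (Finset.mem_insert_self c U')
        exact this
      have hdis' : Disjoint U' T :=
        Finset.disjoint_of_subset_left (Finset.subset_insert c U') hdis
      have hcTU : c ∉ T ∪ U' := by
        simp only [Finset.mem_union]
        rintro (h | h)
        · exact hcT h
        · exact hc h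
      have hunion : T ∪ insert c U' = insert c (T ∪ U') := by
        ext a; simp [Finset.mem_insert, Finset.mem_union]; try tauto
      have hcards : (T ∪ insert c U').card = (T ∪ U').card + 1 := by
        rw [hunion, Finset.card_insert_of_notMem hcTU]
      have hTU : (T ∪ U').card ≤ n := by omega
      have hBc := hB (T ∪ U') hTU c hcTU
      have hsplit := split Φ X c (T ∪ U')
      have hIH := ih T hdis' (by omega)
      have h1 : (1 - Real.exp 1 * p) * ((NS Φ X (T ∪ U')).card : ℝ)
          ≤ ((NS Φ X (insert c (T ∪ U'))).card : ℝ) := by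
        have : ((NS Φ X (T ∪ U')).card : ℝ) =
            ((NS Φ X (insert c (T ∪ U'))).card : ℝ) + ((VS Φ X c (T ∪ U')).card : ℝ) := by
          exact_mod_cast hsplit
        nlinarith [this, hBc]
      have hcardU : (insert c U').card = U'.card + 1 := Finset.card_insert_of_notMem hc
      rw [hunion, hcardU]
      calc (1 - Real.exp 1 * p) ^ (U'.card + 1) * ((NS Φ X T).card : ℝ)
          = (1 - Real.exp 1 * p) * ((1 - Real.exp 1 * p) ^ U'.card * ((NS Φ X T).card : ℝ)) := by
            ring
        _ ≤ (1 - Real.exp 1 * p) * ((NS Φ X (T ∪ U')).card : ℝ) := by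
            have hnn : (0:ℝ) ≤ 1 - Real.exp 1 * p := by linarith
            exact mul_le_mul_of_nonneg_left hIH hnn
        _ ≤ ((NS Φ X (insert c (T ∪ U'))).card : ℝ) := h1

end Main

lemma VS_subset_NS (c : Φ.C) (S : Finset Φ.C) : VS Φ X c S ⊆ NS Φ X S := by
  intro x hx
  rw [mem_VS] at hx
  rw [mem_NS]
  exact hx.1

lemma VS_mono {c : Φ.C} {S T : Finset Φ.C} (h : S ⊆ T) : VS Φ X c T ⊆ VS Φ X c S := by
  intro x hx
  rw [mem_VS] at hx ⊢
  exact ⟨⟨hx.1.1, fun c' hc' => hx.1.2 c' (h hc')⟩, hx.2⟩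

lemma Bmain {p : ℝ} (hp0 : 0 ≤ p)
    (hV : ∀ c, ((VS Φ X c ∅).card : ℝ) ≤ p * ((NS Φ X ∅).card : ℝ))
    (hlll : Real.exp 1 * p * ((Φ.degree : ℝ) + 1) < 1) :
    ∀ (n : ℕ) (S : Finset Φ.C), S.card ≤ n → ∀ c ∉ S,
      ((VS Φ X c S).card : ℝ) ≤ (Real.exp 1 * p) * ((NS Φ X S).card : ℝ) := by
  have hexp1 : (1 : ℝ) ≤ Real.exp 1 := by
    have := Real.add_one_le_exp (1 : ℝ); linarith
  have hep0 : 0 ≤ Real.exp 1 * p := by positivity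
  have hep1 : Real.exp 1 * p < 1 := by
    have hdeg : (1 : ℝ) ≤ (Φ.degree : ℝ) + 1 := by
      have : (0:ℝ) ≤ (Φ.degree : ℝ) := Nat.cast_nonneg _
      linarith
    nlinarith
  have hkey : 1 ≤ Real.exp 1 * (1 - Real.exp 1 * p) ^ Φ.degree :=
    key_ineq Φ.degree (Real.exp 1 * p) hep0 hlll
  intro n
  induction n with
  | zero =>
      intro S hS c _
      have : S = ∅ := Finset.card_eq_zero.1 (Nat.le_zero.1 hS)
      subst this
      calc ((VS Φ X c ∅).card : ℝ) ≤ p * ((NS Φ X ∅).card : ℝ) := hV c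
        _ ≤ (Real.exp 1 * p) * ((NS Φ X ∅).card : ℝ) := by
            apply mul_le_mul_of_nonneg_right _ (Nat.cast_nonneg _)
            nlinarith
  | succ n ih =>
      intro S hS c hcS
      set ep := Real.exp 1 * p with hep
      by_cases h0 : (NS Φ X ∅).card = 0
      · have hsub : VS Φ X c S ⊆ NS Φ X ∅ :=
          (VS_subset_NS Φ X c S).trans (NS_subset Φ X (Finset.empty_subset S))
        have : (VS Φ X c S).card = 0 := by
          have := Finset.card_le_card hsub
          omega
        rw [this]
        simp only [Nat.cast_zero]
        positivity
      -- main case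
      set S₁ := S.filter (fun c' => ((Φ.vbl c) ∩ (Φ.vbl c')).Nonempty) with hS₁
      set S₂ := S.filter (fun c' => ¬ ((Φ.vbl c) ∩ (Φ.vbl c')).Nonempty) with hS₂
      have hU : S₂ ∪ S₁ = S := by
        rw [Finset.union_comm]
        exact Finset.filter_union_filter_not_eq _ S
      have hdisjU : Disjoint S₁ S₂ := Finset.disjoint_filter_filter_not S S _
      have hchain := chain_lemma Φ X hep0 (le_of_lt hep1) n ih S₁ S₂ hdisjU
        (by rw [hU]; exact hS)
      rw [hU] at hchain
      -- S₁.card ≤ degree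
      have hm : S₁.card ≤ Φ.degree := by
        have hsub : S₁ ⊆ Finset.univ.filter
            (fun c' : Φ.C => c' ≠ c ∧ ((Φ.vbl c) ∩ (Φ.vbl c')).Nonempty) := by
          intro c' hc'
          rw [hS₁, Finset.mem_filter] at hc'
          rw [Finset.mem_filter]
          refine ⟨Finset.mem_univ _, ?_, hc'.2⟩
          rintro rfl
          exact hcS hc'.1
        exact le_trans (Finset.card_le_card hsub)
          (Finset.le_sup (f := fun c : Φ.C => (Finset.univ.filter
            (fun c' : Φ.C => c' ≠ c ∧ ((Φ.vbl c) ∩ (Φ.vbl c')).Nonempty)).card)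
            (Finset.mem_univ c))
      -- independence
      have hind := indep Φ X c S₂ (by
        intro c' hc'
        rw [hS₂, Finset.mem_filter] at hc'
        exact Finset.not_nonempty_iff_eq_empty.1 hc'.2)
      have hn0 : (0 : ℝ) < ((NS Φ X ∅).card : ℝ) := by
        have : 0 < (NS Φ X ∅).card := Nat.pos_of_ne_zero h0
        exact_mod_cast this
      have hindR : ((VS Φ X c S₂).card : ℝ) * ((NS Φ X ∅).card : ℝ)
          = ((VS Φ X c ∅).card : ℝ) * ((NS Φ X S₂).card : ℝ) := by exact_mod_cast hind
      have hv2 : ((VS Φ X c S₂).card : ℝ) ≤ p * ((NS Φ X S₂).card : ℝ) := by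
        have h1 : ((VS Φ X c S₂).card : ℝ) * ((NS Φ X ∅).card : ℝ)
            ≤ (p * ((NS Φ X S₂).card : ℝ)) * ((NS Φ X ∅).card : ℝ) := by
          rw [hindR]
          have := mul_le_mul_of_nonneg_right (hV c) (Nat.cast_nonneg (NS Φ X S₂).card)
          calc ((VS Φ X c ∅).card : ℝ) * ((NS Φ X S₂).card : ℝ)
              ≤ p * ((NS Φ X ∅).card : ℝ) * ((NS Φ X S₂).card : ℝ) := this
            _ = (p * ((NS Φ X S₂).card : ℝ)) * ((NS Φ X ∅).card : ℝ) := by ring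
        exact le_of_mul_le_mul_right h1 hn0
      have hvS : ((VS Φ X c S).card : ℝ) ≤ ((VS Φ X c S₂).card : ℝ) := by
        exact_mod_cast Finset.card_le_card (VS_mono Φ X (by
          rw [hS₂]; exact Finset.filter_subset _ S))
      -- p ≤ ep (1-ep)^{S₁.card}
      have hpow : (1 - ep) ^ Φ.degree ≤ (1 - ep) ^ S₁.card :=
        pow_le_pow_of_le_one (by linarith) (by linarith) hm
      have hple : p ≤ ep * (1 - ep) ^ S₁.card := by
        have h1 : 1 ≤ Real.exp 1 * (1 - ep) ^ S₁.card := le_trans hkey (by nlinarith)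
        calc p = p * 1 := (mul_one p).symm
          _ ≤ p * (Real.exp 1 * (1 - ep) ^ S₁.card) := by
              exact mul_le_mul_of_nonneg_left h1 hp0
          _ = ep * (1 - ep) ^ S₁.card := by rw [hep]; ring
      calc ((VS Φ X c S).card : ℝ) ≤ p * ((NS Φ X S₂).card : ℝ) := le_trans hvS hv2
        _ ≤ (ep * (1 - ep) ^ S₁.card) * ((NS Φ X S₂).card : ℝ) :=
            mul_le_mul_of_nonneg_right hple (Nat.cast_nonneg _)
        _ = ep * ((1 - ep) ^ S₁.card * ((NS Φ X S₂).card : ℝ)) := by ring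
        _ ≤ ep * ((NS Φ X S).card : ℝ) := mul_le_mul_of_nonneg_left hchain hep0

lemma NS_empty_card_pos : 0 < (NS Φ X ∅).card := by
  have hne : ∀ v, Nonempty (Φ.Q v) := fun v =>
    Fintype.card_pos_iff.1 (by have := Φ.card_two v; omega)
  refine Finset.card_pos.2 ⟨fun v => match X v with
    | PVal.val a => a
    | PVal.star => Classical.choice (hne v)
    | PVal.unacc => Classical.choice (hne v), ?_⟩
  rw [mem_NS]
  refine ⟨?_, by simp⟩
  intro v a hv
  simp only []
  rw [hv]

lemma ncard_filter {α : Type} [Fintype α] (s : Set α) [DecidablePred (· ∈ s)] :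
    s.ncard = (Finset.univ.filter (· ∈ s)).card := by
  rw [Set.ncard_eq_toFinset_card']
  congr 1
  ext a
  simp

end CSPaux

open CSPaux

/-- If `e·p'·q·(Δ+1) < 1` and the partial assignment `X` (taking no `⋆` values) satisfies
`ℙ[¬c | X] ≤ p'·q` for all `c`, then the fraction of full assignments extending `X` that
are satisfying is at least `(1 − e·p'·q)^{|𝒞|}`. -/
theorem statement7 {V : Type} [Fintype V] [DecidableEq V] (Φ : CSP V)
    (p' : ℝ) (hp' : p' ∈ Set.Ioo (0 : ℝ) 1)
    (hlll : Real.exp 1 * p' * (Φ.qmax : ℝ) * ((Φ.degree : ℝ) + 1) < 1)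
    (X : Φ.PAssign) (hX : ∀ v, X v ≠ PVal.star)
    (hcond : ∀ c, Φ.condProb (Φ.viol c) X ≤ p' * (Φ.qmax : ℝ)) :
    (1 - Real.exp 1 * p' * (Φ.qmax : ℝ)) ^ (Fintype.card Φ.C)
      ≤ ((Φ.Sat ∩ {x | Φ.agrees X x}).ncard : ℝ) /
          (({x : Φ.Assign | Φ.agrees X x}).ncard : ℝ) := by
  classical
  set p : ℝ := p' * (Φ.qmax : ℝ) with hpdef
  have hq0 : (0:ℝ) ≤ (Φ.qmax : ℝ) := Nat.cast_nonneg _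
  have hp0 : 0 ≤ p := mul_nonneg (le_of_lt hp'.1) hq0
  have hlll' : Real.exp 1 * p * ((Φ.degree : ℝ) + 1) < 1 := by
    rw [hpdef, show Real.exp 1 * (p' * (Φ.qmax:ℝ)) = Real.exp 1 * p' * (Φ.qmax:ℝ) from by ring]
    exact hlll
  -- counting conversions
  have hEcnt : (({x : Φ.Assign | Φ.agrees X x}).ncard : ℕ) = (NS Φ X ∅).card := by
    rw [ncard_filter]
    congr 1
    ext x
    simp [NS]
  have hScnt : ((Φ.Sat ∩ {x | Φ.agrees X x}).ncard : ℕ) = (NS Φ X Finset.univ).card := by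
    rw [ncard_filter]
    congr 1
    ext x
    simp only [Finset.mem_filter, Finset.mem_univ, true_and, Set.mem_inter_iff,
      Set.mem_setOf_eq, CSP.Sat, mem_NS]
    tauto
  have hVcnt : ∀ c, ((Φ.viol c ∩ {x | Φ.agrees X x}).ncard : ℕ) = (VS Φ X c ∅).card := by
    intro c
    rw [ncard_filter]
    congr 1
    ext x
    simp only [Finset.mem_filter, Finset.mem_univ, true_and, Set.mem_inter_iff,
      Set.mem_setOf_eq, CSP.viol, mem_VS, Finset.notMem_empty, false_implies, implies_true,
      and_true]
    tauto
  have hn0 : 0 < (NS Φ X ∅).card := NS_empty_card_pos Φ X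
  have hn0R : (0:ℝ) < ((NS Φ X ∅).card : ℝ) := by exact_mod_cast hn0
  have hV : ∀ c, ((VS Φ X c ∅).card : ℝ) ≤ p * ((NS Φ X ∅).card : ℝ) := by
    intro c
    have h := hcond c
    rw [CSP.condProb] at h
    rw [hVcnt c, hEcnt] at h
    rw [div_le_iff₀ hn0R] at h
    calc ((VS Φ X c ∅).card : ℝ) ≤ p' * (Φ.qmax:ℝ) * ((NS Φ X ∅).card : ℝ) := h
      _ = p * ((NS Φ X ∅).card : ℝ) := by rw [hpdef]
  have hexp1 : (1 : ℝ) ≤ Real.exp 1 := by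
    have := Real.add_one_le_exp (1 : ℝ); linarith
  have hep0 : 0 ≤ Real.exp 1 * p := by positivity
  have hep1 : Real.exp 1 * p < 1 := by
    have hd : (0:ℝ) ≤ (Φ.degree : ℝ) := Nat.cast_nonneg _
    nlinarith
  have hB := Bmain Φ X hp0 hV hlll' (Fintype.card Φ.C)
  have hchain := chain_lemma Φ X hep0 (le_of_lt hep1) (Fintype.card Φ.C) hB
    Finset.univ ∅ (Finset.disjoint_empty_right _)
    (by simp [Finset.card_univ])
  rw [Finset.empty_union, Finset.card_univ] at hchain
  have hgoalc : Real.exp 1 * p' * (Φ.qmax : ℝ) = Real.exp 1 * p := by rw [hpdef]; ring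
  rw [hgoalc, hScnt, hEcnt, le_div_iff₀ hn0R]
  exact hchain
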